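/- Let k ≥ 1 be an integer and set ρ* = 1 − 1/(2k). Define Q_{k,0}(t) = −1 + (1/2 + ρ*/2)·(1+t)^{2k} + (1/2 − ρ*/2)·Σ_{j=0}^{k} C(2k,2j)·(1−t)^{2k−2j}·(−4t)^{j}. Then Q_{k,0}(t) ≥ 0 for all real t. -/

import Mathlib

open Finset Complex

/-- Sum over an even-vanishing function. -/
lemma sum_even_vanish {M : Type*} [AddCommMonoid M] (g : ℕ → M)
    (h : ∀ m, Odd m → g m = 0) :
    ∀ n, ∑ m ∈ Finset.range (2*n+1), g m = ∑ j ∈ Finset.range (n+1), g (2*j) := by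
  intro n
  induction n with
  | zero => simp
  | succ n ih =>
      have h1 : 2*(n+1)+1 = (2*n+1) + 1 + 1 := by ring
      rw [h1, Finset.sum_range_succ, Finset.sum_range_succ, ih,
        h (2*n+1) ⟨n, by ring⟩, add_zero,
        Finset.sum_range_succ (fun j => g (2*j)) (n+1)]
      have h2 : 2*n+1+1 = 2*(n+1) := by ring
      rw [h2]

/-- Even part of the binomial expansion. -/
lemma even_binom {R : Type*} [CommRing R] (x y : R) (k : ℕ) :
    (x+y)^(2*k) + (x-y)^(2*k)
      = 2 * ∑ j ∈ Finset.range (k+1),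
          ((2*k).choose (2*j) : R) * x^(2*k-2*j) * y^(2*j) := by
  have e1 : (x+y)^(2*k) = ∑ m ∈ Finset.range (2*k+1),
      y ^ m * x ^ (2*k - m) * ((2*k).choose m : R) := by
    rw [add_comm x y, add_pow]
  have e2 : (x-y)^(2*k) = ∑ m ∈ Finset.range (2*k+1),
      (-y) ^ m * x ^ (2*k - m) * ((2*k).choose m : R) := by
    have : x - y = -y + x := by ring
    rw [this, add_pow]
  rw [e1, e2, ← Finset.sum_add_distrib]
  have key := sum_even_vanish
    (fun m => y ^ m * x ^ (2*k - m) * ((2*k).choose m : R)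
      + (-y) ^ m * x ^ (2*k - m) * ((2*k).choose m : R))
    (by
      intro m hm
      have : (-y) ^ m = -(y ^ m) := Odd.neg_pow hm y
      simp only [this]; ring) k
  rw [key, Finset.mul_sum]
  refine Finset.sum_congr rfl ?_
  intro j hj
  have : (-y) ^ (2*j) = y ^ (2*j) := Even.neg_pow ⟨j, by ring⟩ y
  rw [this]; ring

/-- Key bound on the imaginary part of a power. -/
lemma abs_im_pow_le (z : ℂ) :
    ∀ n, |(z^n).im| ≤ |z.im| * ∑ i ∈ Finset.range n,
      ‖z‖^(n-1-i) * |z.re|^i := by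
  intro n
  induction n with
  | zero => simp
  | succ n ih =>
      have hmul : (z^(n+1)).im = (z^n).re * z.im + (z^n).im * z.re := by
        rw [pow_succ]; exact Complex.mul_im _ _
      have h1 : |(z^(n+1)).im| ≤ |(z^n).re| * |z.im| + |(z^n).im| * |z.re| := by
        rw [hmul]
        calc |(z^n).re * z.im + (z^n).im * z.re|
            ≤ |(z^n).re * z.im| + |(z^n).im * z.re| := abs_add_le _ _
          _ = |(z^n).re| * |z.im| + |(z^n).im| * |z.re| := by rw [abs_mul, abs_mul]
      have h2 : |(z^n).re| ≤ ‖z‖^n := by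
        calc |(z^n).re| ≤ ‖z^n‖ := Complex.abs_re_le_norm _
          _ = ‖z‖^n := norm_pow _ _
      have h3 : |(z^n).im| * |z.re| ≤
          (|z.im| * ∑ i ∈ Finset.range n, ‖z‖^(n-1-i) * |z.re|^i) * |z.re| :=
        mul_le_mul_of_nonneg_right ih (abs_nonneg _)
      have hsum : ∑ i ∈ Finset.range (n+1), ‖z‖^(n+1-1-i) * |z.re|^i
          = (∑ i ∈ Finset.range n, ‖z‖^(n-1-i) * |z.re|^(i+1))
            + ‖z‖^n := by
        rw [Finset.sum_range_succ' (fun i => ‖z‖^(n+1-1-i) * |z.re|^i) n]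
        congr 1
        · refine Finset.sum_congr rfl ?_
          intro i hi
          have hni : n + 1 - 1 - (i+1) = n - 1 - i := by omega
          rw [hni]
        · simp
      calc |(z^(n+1)).im| ≤ |(z^n).re| * |z.im| + |(z^n).im| * |z.re| := h1
        _ ≤ ‖z‖^n * |z.im|
            + (|z.im| * ∑ i ∈ Finset.range n, ‖z‖^(n-1-i) * |z.re|^i) * |z.re| := by
            gcongr
        _ = |z.im| * ((∑ i ∈ Finset.range n, ‖z‖^(n-1-i) * |z.re|^(i+1))
              + ‖z‖^n) := by
            have hmm : (|z.im| * ∑ i ∈ Finset.range n, ‖z‖^(n-1-i) * |z.re|^i) * |z.re|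
                = |z.im| * ∑ i ∈ Finset.range n, ‖z‖^(n-1-i) * |z.re|^(i+1) := by
              rw [mul_assoc, Finset.sum_mul]
              congr 1
              refine Finset.sum_congr rfl ?_
              intro i _
              ring
            rw [hmm]
            ring
        _ = |z.im| * ∑ i ∈ Finset.range (n+1), ‖z‖^(n+1-1-i) * |z.re|^i := by
            rw [hsum]

/-- Quadratic bound on the imaginary part of a power. -/
lemma im_pow_sq_le (z : ℂ) (n : ℕ) :
    ((z^n).im)^2 ≤ n * ((Complex.normSq z)^n - (z.re^2)^n) := by
  set r := ‖z‖ with hr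
  set a := fun i => r^(n-1-i) * |z.re|^i with ha
  have h0 : |(z^n).im| ≤ |z.im| * ∑ i ∈ Finset.range n, a i := abs_im_pow_le z n
  have hnn : 0 ≤ |z.im| * ∑ i ∈ Finset.range n, a i := by
    apply mul_nonneg (abs_nonneg _)
    apply Finset.sum_nonneg
    intro i _
    exact mul_nonneg (pow_nonneg (norm_nonneg z) _) (pow_nonneg (abs_nonneg _) _)
  have h1 : ((z^n).im)^2 ≤ (|z.im| * ∑ i ∈ Finset.range n, a i)^2 := by
    rw [← _root_.sq_abs ((z^n).im)]
    exact pow_le_pow_left₀ (abs_nonneg _) h0 2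
  have h2 : (∑ i ∈ Finset.range n, a i)^2 ≤ n * ∑ i ∈ Finset.range n, (a i)^2 := by
    have := sq_sum_le_card_mul_sum_sq (s := Finset.range n) (f := a)
    simpa using this
  have h3 : ∑ i ∈ Finset.range n, (a i)^2
      = ∑ i ∈ Finset.range n, (z.re^2)^i * (r^2)^(n-1-i) := by
    refine Finset.sum_congr rfl ?_
    intro i _
    simp only [ha]
    rw [mul_pow, ← pow_mul, ← pow_mul, mul_comm (n-1-i) 2, mul_comm i 2,
      pow_mul, pow_mul, _root_.sq_abs, mul_comm]
  have hgeom : (∑ i ∈ Finset.range n, (z.re^2)^i * (r^2)^(n-1-i)) * (z.re^2 - r^2)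
      = (z.re^2)^n - (r^2)^n := geom_sum₂_mul _ _ n
  have hy : r^2 - z.re^2 = z.im^2 := by
    rw [Complex.sq_norm, Complex.normSq_apply]; ring
  have h4 : z.im^2 * ∑ i ∈ Finset.range n, (a i)^2 = (r^2)^n - (z.re^2)^n := by
    rw [h3, ← hy]
    have : (∑ i ∈ Finset.range n, (z.re^2)^i * (r^2)^(n-1-i)) * (r^2 - z.re^2)
        = (r^2)^n - (z.re^2)^n := by
      have := hgeom
      linarith [hgeom]
    linarith [this, mul_comm (r^2 - z.re^2) (∑ i ∈ Finset.range n, (z.re^2)^i * (r^2)^(n-1-i))]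
  have h5 : (|z.im| * ∑ i ∈ Finset.range n, a i)^2
      = z.im^2 * (∑ i ∈ Finset.range n, a i)^2 := by
    rw [mul_pow, _root_.sq_abs]
  have h6 : z.im^2 * (∑ i ∈ Finset.range n, a i)^2
      ≤ z.im^2 * (n * ∑ i ∈ Finset.range n, (a i)^2) :=
    mul_le_mul_of_nonneg_left h2 (sq_nonneg _)
  have h7 : z.im^2 * (n * ∑ i ∈ Finset.range n, (a i)^2)
      = n * ((r^2)^n - (z.re^2)^n) := by
    rw [← h4]; ring
  have h8 : (r^2)^n = (Complex.normSq z)^n := by rw [Complex.sq_norm]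
  calc ((z^n).im)^2 ≤ (|z.im| * ∑ i ∈ Finset.range n, a i)^2 := h1
    _ = z.im^2 * (∑ i ∈ Finset.range n, a i)^2 := h5
    _ ≤ z.im^2 * (n * ∑ i ∈ Finset.range n, (a i)^2) := h6
    _ = n * ((r^2)^n - (z.re^2)^n) := h7
    _ = n * ((Complex.normSq z)^n - (z.re^2)^n) := by rw [h8]

/-- For `k ≥ 1` and `ρ* = 1 − 1/(2k)`, the polynomial
`Q_{k,0}(t) = −1 + (1/2 + ρ*/2)(1+t)^{2k}
            + (1/2 − ρ*/2) Σ_{j=0}^{k} C(2k,2j) (1−t)^{2k−2j} (−4t)^j`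
is nonnegative for all real `t`. -/
theorem stmt_8 (k : ℕ) (hk : 1 ≤ k) (t : ℝ) :
    0 ≤ -1 + (1/2 + (1 - 1/(2*(k:ℝ)))/2) * (1+t)^(2*k)
      + (1/2 - (1 - 1/(2*(k:ℝ)))/2) *
        ∑ j ∈ Finset.range (k+1),
          ((2*k).choose (2*j) : ℝ) * (1-t)^(2*k-2*j) * (-4*t)^j := by
  have hK1 : (1:ℝ) ≤ (k:ℝ) := by exact_mod_cast hk
  have hKpos : (0:ℝ) < (k:ℝ) := by linarith
  rcases le_or_gt 0 t with ht | ht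
  · -- t ≥ 0 : complex-number argument
    set r : ℝ := Real.sqrt t with hrdef
    have hr2 : r^2 = t := Real.sq_sqrt ht
    set z : ℂ := 1 + (r:ℂ) * Complex.I with hz
    have hre : z.re = 1 := by simp [hz]
    have him : z.im = r := by simp [hz]
    have hnsq : Complex.normSq z = 1 + t := by
      rw [Complex.normSq_apply, hre, him, ← hr2]; ring
    -- identity: the sum equals (z^(4k)).re = ((z^2)^(2k)).re
    have hx : ((1 - t : ℝ) : ℂ) + (2*r:ℝ) * Complex.I = z^2 := by
      rw [hz]
      push_cast
      rw [← hr2]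
      ring_nf
      rw [Complex.I_sq]
      push_cast
      ring
    have hid : (∑ j ∈ Finset.range (k+1),
        ((2*k).choose (2*j) : ℝ) * (1-t)^(2*k-2*j) * (-4*t)^j)
        = ((z^2)^(2*k)).re := by
      have hEB := even_binom (((1 - t : ℝ)) : ℂ) ((2*r:ℝ) * Complex.I) k
      have hy2 : (((2*r:ℝ) : ℂ) * Complex.I)^2 = ((-4*t : ℝ) : ℂ) := by
        rw [mul_pow, Complex.I_sq, ← hr2]
        push_cast
        ring
      have hconj : ((1 - t : ℝ) : ℂ) - (2*r:ℝ) * Complex.I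
          = (starRingEnd ℂ) (z^2) := by
        rw [← hx]
        simp [Complex.ext_iff]
      have hsum2 : (2 : ℂ) * ∑ j ∈ Finset.range (k+1),
          (((2*k).choose (2*j) : ℝ) * (1-t)^(2*k-2*j) * (-4*t)^j : ℂ)
          = (z^2)^(2*k) + (starRingEnd ℂ) ((z^2)^(2*k)) := by
        rw [map_pow, ← hconj, ← hx, even_binom]
        congr 1
        refine Finset.sum_congr rfl ?_
        intro j hj
        rw [pow_mul, hy2]
        push_cast
        ring
      have hre2 : (z^2)^(2*k) + (starRingEnd ℂ) ((z^2)^(2*k))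
          = ((2 * ((z^2)^(2*k)).re : ℝ) : ℂ) := Complex.add_conj _
      rw [hre2] at hsum2
      have : ((2 * (∑ j ∈ Finset.range (k+1),
          ((2*k).choose (2*j) : ℝ) * (1-t)^(2*k-2*j) * (-4*t)^j) : ℝ) : ℂ)
          = ((2 * ((z^2)^(2*k)).re : ℝ) : ℂ) := by
        rw [← hsum2]
        push_cast
        ring
      have := Complex.ofReal_inj.mp this
      linarith
    -- express the real part via the imaginary part of z^(2k)
    set w : ℂ := z^(2*k) with hw
    have hwsq : (z^2)^(2*k) = w^2 := by
      rw [hw, ← pow_mul, ← pow_mul, mul_comm 2 (2*k)]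
    have hwre : (w^2).re = Complex.normSq w - 2 * w.im^2 := by
      rw [pow_two, Complex.mul_re, Complex.normSq_apply]
      ring
    have hnw : Complex.normSq w = (1+t)^(2*k) := by
      rw [hw, map_pow, hnsq]
    have hIm : (w.im)^2 ≤ (2*k : ℝ) * ((1+t)^(2*k) - 1) := by
      have := im_pow_sq_le z (2*k)
      rw [hre, hnsq] at this
      simpa using this
    have hSge : (∑ j ∈ Finset.range (k+1),
        ((2*k).choose (2*j) : ℝ) * (1-t)^(2*k-2*j) * (-4*t)^j)
        = (1+t)^(2*k) - 2 * w.im^2 := by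
      rw [hid, hwsq, hwre, hnw]
    rw [hSge]
    have hB : (1/2 - (1 - 1/(2*(k:ℝ)))/2) = 1/(4*(k:ℝ)) := by
      field_simp
      ring
    have hA : (1/2 + (1 - 1/(2*(k:ℝ)))/2) = 1 - 1/(4*(k:ℝ)) := by
      field_simp
      ring
    rw [hA, hB]
    have hKne : (4*(k:ℝ)) ≠ 0 := by positivity
    set R := (1+t)^(2*k) with hR
    -- goal: 0 ≤ -1 + (1 - 1/(4k)) R + (1/(4k))(R - 2 im²)
    have h2 : (1/(4*(k:ℝ))) * (2 * w.im^2) ≤ (1/(4*(k:ℝ))) * (2 * ((2*k:ℝ) * (R - 1))) := by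
      apply mul_le_mul_of_nonneg_left _ (by positivity)
      linarith
    have h3 : (1/(4*(k:ℝ))) * (2 * ((2*k:ℝ) * (R - 1))) = R - 1 := by
      field_simp
      ring
    nlinarith [h2, h3]
  · -- t < 0 : real binomial argument
    set u : ℝ := Real.sqrt (-t) with hudef
    have hu2 : u^2 = -t := Real.sq_sqrt (by linarith)
    have hid : (∑ j ∈ Finset.range (k+1),
        ((2*k).choose (2*j) : ℝ) * (1-t)^(2*k-2*j) * (-4*t)^j)
        = (((1+u)^2)^(2*k) + ((1-u)^2)^(2*k)) / 2 := by
      have hEB := even_binom (1 - t) (2*u) k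
      have hxy : (1 - t) + 2*u = (1+u)^2 := by linear_combination -hu2
      have hxy' : (1 - t) - 2*u = (1-u)^2 := by linear_combination -hu2
      rw [hxy, hxy'] at hEB
      have : ∑ j ∈ Finset.range (k+1),
          ((2*k).choose (2*j) : ℝ) * (1-t)^(2*k-2*j) * (2*u)^(2*j)
          = ∑ j ∈ Finset.range (k+1),
          ((2*k).choose (2*j) : ℝ) * (1-t)^(2*k-2*j) * (-4*t)^j := by
        refine Finset.sum_congr rfl ?_
        intro j _
        rw [pow_mul]
        congr 2
        linear_combination 4*hu2
      rw [this] at hEB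
      rw [← pow_mul, ← pow_mul] at hEB
      rw [← pow_mul, ← pow_mul]
      linarith
    rw [hid]
    -- lower bounds
    have hX : (1+t)^(2*k) ≥ 1 - 2*(k:ℝ)*u^2 := by
      rcases le_or_gt (u^2) 2 with hu | hu
      · have := one_add_mul_le_pow (a := -u^2) (by linarith) (2*k)
        have he : (1 + -u^2) = 1 + t := by linear_combination -hu2
        rw [he] at this
        push_cast at this
        linarith
      · have h0 : (0:ℝ) ≤ (1+t)^(2*k) := by
          rw [pow_mul]
          exact pow_nonneg (sq_nonneg _) _
        nlinarith
    have hY : ((1+u)^2)^(2*k) + ((1-u)^2)^(2*k)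
        ≥ 2 * (1 + 2*(k:ℝ)*(4*(k:ℝ)-1) * u^2) := by
      have hEB2 := even_binom (1:ℝ) u (2*k)
      have h1 : ((1:ℝ)+u)^(2*(2*k)) = ((1+u)^2)^(2*k) := by rw [← pow_mul]
      have h2 : ((1:ℝ)-u)^(2*(2*k)) = ((1-u)^2)^(2*k) := by rw [← pow_mul]
      rw [h1, h2] at hEB2
      have hsub : ∑ j ∈ Finset.range 2,
          ((2*(2*k)).choose (2*j) : ℝ) * 1^(2*(2*k)-2*j) * u^(2*j)
          ≤ ∑ j ∈ Finset.range (2*k+1),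
          ((2*(2*k)).choose (2*j) : ℝ) * 1^(2*(2*k)-2*j) * u^(2*j) := by
        apply Finset.sum_le_sum_of_subset_of_nonneg
        · apply Finset.range_subset_range.2; omega
        · intro i _ _
          have : u^(2*i) = (u^2)^i := by rw [pow_mul]
          rw [this]
          positivity
      have hfirst : ∑ j ∈ Finset.range 2,
          ((2*(2*k)).choose (2*j) : ℝ) * 1^(2*(2*k)-2*j) * u^(2*j)
          = 1 + ((4*k).choose 2 : ℝ) * u^2 := by
        rw [Finset.sum_range_succ, Finset.sum_range_succ, Finset.sum_range_zero]
        have e1 : (2*(2*k)).choose 0 = 1 := Nat.choose_zero_right _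
        have e2 : 2*(2*k) = 4*k := by ring
        rw [e1, e2]
        norm_num
      have hch : ((4*k).choose 2 : ℝ) = 2*(k:ℝ)*(4*(k:ℝ)-1) := by
        have h : (4*k).choose 2 = 2*k*(4*k-1) := by
          rw [Nat.choose_two_right]
          have : 4*k*(4*k-1) = 2*(2*k*(4*k-1)) := by ring
          rw [this, Nat.mul_div_cancel_left _ (by norm_num)]
        rw [h]
        push_cast [Nat.cast_sub (by omega : 1 ≤ 4*k)]
        ring
      rw [hch] at hfirst
      linarith
    have hB : (1/2 - (1 - 1/(2*(k:ℝ)))/2) = 1/(4*(k:ℝ)) := by field_simp; ring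
    have hA : (1/2 + (1 - 1/(2*(k:ℝ)))/2) = 1 - 1/(4*(k:ℝ)) := by
      field_simp; ring
    rw [hA, hB]
    have hBpos : (0:ℝ) < 1/(4*(k:ℝ)) := by positivity
    have hApos : (0:ℝ) ≤ 1 - 1/(4*(k:ℝ)) := by
      rw [sub_nonneg]
      rw [div_le_one (by positivity)]
      linarith
    have hstep1 : (1 - 1/(4*(k:ℝ))) * (1+t)^(2*k)
        ≥ (1 - 1/(4*(k:ℝ))) * (1 - 2*(k:ℝ)*u^2) :=
      mul_le_mul_of_nonneg_left hX hApos
    have hstep2 : (1/(4*(k:ℝ))) * ((((1+u)^2)^(2*k) + ((1-u)^2)^(2*k)) / 2)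
        ≥ (1/(4*(k:ℝ))) * (1 + 2*(k:ℝ)*(4*(k:ℝ)-1) * u^2) := by
      apply mul_le_mul_of_nonneg_left _ (le_of_lt hBpos)
      linarith
    have hfinal : (1 - 1/(4*(k:ℝ))) * (1 - 2*(k:ℝ)*u^2)
        + (1/(4*(k:ℝ))) * (1 + 2*(k:ℝ)*(4*(k:ℝ)-1) * u^2) = 1 := by
      field_simp
      ring
    linarith
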